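/- Let n ≥ 2 and 1 ≤ k ≤ n-1. Fix a directed walk W of length n-k from vertex 1 to vertex 2 in the complete directed graph on {1,…,n}. Then the number of walks of length n from 1 to 2 whose first minimal closed subwalk has length k and which map to W under deleting that closed subwalk is at most μ(n,k) = (n-k+1)∏_{j=1}^{k-1}(n-j). -/

import Mathlib

/-- `μ(n,k) = (n-k+1)·∏_{j=1}^{k-1}(n-j)`. -/
def muBound (n k : ℕ) : ℕ := (n - k + 1) * ∏ j ∈ Finset.Icc 1 (k - 1), (n - j)

/-- Puncture map: sends `v ≠ a` in `Fin n` injectively into `Fin (n-1)`. -/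
def punct {n : ℕ} (hn : 2 ≤ n) (a v : Fin n) : Fin (n - 1) :=
  ⟨if v.val < a.val then v.val else v.val - 1, by
    have hv := v.isLt; have ha := a.isLt; split_ifs <;> omega⟩

lemma punct_inj {n : ℕ} (hn : 2 ≤ n) (a v v' : Fin n) (hv : v ≠ a) (hv' : v' ≠ a)
    (h : punct hn a v = punct hn a v') : v = v' := by
  have h1 : v.val ≠ a.val := fun e => hv (Fin.ext e)
  have h2 : v'.val ≠ a.val := fun e => hv' (Fin.ext e)
  have h3 := congrArg Fin.val h
  simp only [punct] at h3
  apply Fin.ext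
  split_ifs at h3 <;> omega

lemma muBound_eq (n k : ℕ) (hn : 2 ≤ n) (hk1 : 1 ≤ k) :
    Nat.card (Fin (n - k + 1) × (Fin (k - 1) ↪ Fin (n - 1))) = muBound n k := by
  rw [Nat.card_eq_fintype_card, Fintype.card_prod, Fintype.card_fin,
    Fintype.card_embedding_eq, Fintype.card_fin, Fintype.card_fin]
  unfold muBound
  congr 1
  rw [Nat.descFactorial_eq_prod_range]
  have hIck : Finset.Icc 1 (k - 1) = Finset.Ico 1 k := by
    rw [← Finset.Ico_add_one_right_eq_Icc]; congr 1; omega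
  rw [hIck, Finset.prod_Ico_eq_prod_range]
  exact Finset.prod_congr rfl fun i _ => by omega

theorem fiber_aux (n k : ℕ) (hn : 2 ≤ n) (hk1 : 1 ≤ k) (hkn : k ≤ n - 1)
    (W : ℕ → Fin n) (v0 v1 : Fin n) :
    Nat.card {w : ℕ → Fin n //
      w 0 = v0 ∧ w n = v1 ∧ (∀ r, n < r → w r = w n) ∧
      (∀ l p, 1 ≤ l → l < k → p + l ≤ n → w p ≠ w (p + l)) ∧
      (∃ p, (p + k ≤ n ∧ w p = w (p + k) ∧
          ∀ q < p, q + k ≤ n → w q ≠ w (q + k)) ∧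
        ∀ r ≤ n - k, (if r ≤ p then w r else w (r + k)) = W r)} ≤
    muBound n k := by
  classical
  set S := {w : ℕ → Fin n //
      w 0 = v0 ∧ w n = v1 ∧ (∀ r, n < r → w r = w n) ∧
      (∀ l p, 1 ≤ l → l < k → p + l ≤ n → w p ≠ w (p + l)) ∧
      (∃ p, (p + k ≤ n ∧ w p = w (p + k) ∧
          ∀ q < p, q + k ≤ n → w q ≠ w (q + k)) ∧
        ∀ r ≤ n - k, (if r ≤ p then w r else w (r + k)) = W r)} with hS
  have hex : ∀ w : S, ∃ p, (p + k ≤ n ∧ w.1 p = w.1 (p + k) ∧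
      ∀ q < p, q + k ≤ n → w.1 q ≠ w.1 (q + k)) ∧
      ∀ r ≤ n - k, (if r ≤ p then w.1 r else w.1 (r + k)) = W r :=
    fun w => w.2.2.2.2.2
  choose P hP1 hPψ using hex
  have hPle : ∀ w : S, P w + k ≤ n := fun w => (hP1 w).1
  have hPclosed : ∀ w : S, w.1 (P w) = w.1 (P w + k) := fun w => (hP1 w).2.1
  have hD : ∀ w : S, ∀ l p, 1 ≤ l → l < k → p + l ≤ n → w.1 p ≠ w.1 (p + l) :=
    fun w => w.2.2.2.2.1
  have hbase : ∀ w : S, w.1 (P w) = W (P w) := by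
    intro w
    have h := hPψ w (P w) (by have := hPle w; omega)
    rwa [if_pos le_rfl] at h
  have key : ∀ (w : S) (i : Fin (k - 1)), w.1 (P w + 1 + (i : ℕ)) ≠ w.1 (P w) := by
    intro w i
    have h := hD w (1 + (i : ℕ)) (P w) (by omega) (by have := i.isLt; omega)
      (by have := hPle w; have := i.isLt; omega)
    rw [← add_assoc] at h
    exact fun he => h he.symm
  have hFinj : Function.Injective (fun w : S =>
      ((⟨P w, by have := hPle w; omega⟩ : Fin (n - k + 1)),
       (⟨fun i => punct hn (w.1 (P w)) (w.1 (P w + 1 + (i : ℕ))), by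
          intro i j hij
          have hvv := punct_inj hn _ _ _ (key w i) (key w j) hij
          by_contra hne
          rcases lt_or_gt_of_ne (fun e : (i : ℕ) = (j : ℕ) => hne (Fin.ext e)) with hlt | hlt
          · exact hD w ((j : ℕ) - (i : ℕ)) (P w + 1 + (i : ℕ)) (by omega)
              (by have := j.isLt; omega) (by have := hPle w; have := j.isLt; omega)
              (by rw [show P w + 1 + (i : ℕ) + ((j : ℕ) - (i : ℕ)) = P w + 1 + (j : ℕ) by omega]
                  exact hvv)
          · exact hD w ((i : ℕ) - (j : ℕ)) (P w + 1 + (j : ℕ)) (by omega)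
              (by have := i.isLt; omega) (by have := hPle w; have := i.isLt; omega)
              (by rw [show P w + 1 + (j : ℕ) + ((i : ℕ) - (j : ℕ)) = P w + 1 + (i : ℕ) by omega]
                  exact hvv.symm)⟩ : Fin (k - 1) ↪ Fin (n - 1)))) := by
    intro w w' h
    rw [Prod.mk.injEq] at h
    have h1 : P w = P w' := congrArg Fin.val h.1
    have hemb := h.2
    have ha : w.1 (P w) = w'.1 (P w') := by rw [hbase w, hbase w', h1]
    have ha' : w.1 (P w) = w'.1 (P w) := by rw [ha, h1]
    have hmid : ∀ i : Fin (k - 1), w.1 (P w + 1 + (i : ℕ)) = w'.1 (P w + 1 + (i : ℕ)) := by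
      intro i
      have h2 := congrArg (fun f : Fin (k - 1) ↪ Fin (n - 1) => f i) hemb
      change punct hn (w.1 (P w)) (w.1 (P w + 1 + (i : ℕ))) = punct hn (w'.1 (P w')) (w'.1 (P w' + 1 + (i : ℕ))) at h2
      rw [← h1] at h2
      rw [← ha'] at h2
      have hk2 : w'.1 (P w + 1 + (i : ℕ)) ≠ w.1 (P w) := by
        rw [ha, h1]; exact key w' i
      exact punct_inj hn _ _ _ (key w i) hk2 h2
    apply Subtype.ext
    funext r
    rcases le_or_gt r (P w) with hr | hr
    · have e1 := hPψ w r (by have := hPle w; omega)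
      have e2 := hPψ w' r (by have := hPle w; omega)
      rw [if_pos hr] at e1
      rw [if_pos (by omega : r ≤ P w')] at e2
      rw [e1, e2]
    · rcases lt_or_ge r (P w + k) with hr2 | hr2
      · have hi : r - P w - 1 < k - 1 := by omega
        have h5 := hmid ⟨r - P w - 1, hi⟩
        have h6 : P w + 1 + ((⟨r - P w - 1, hi⟩ : Fin (k - 1)) : ℕ) = r := by
          show P w + 1 + (r - P w - 1) = r; omega
        rw [h6] at h5; exact h5
      · rcases le_or_gt r n with hr3 | hr3
        · rcases eq_or_lt_of_le hr2 with he | hlt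
          · rw [← he, ← hPclosed w, ha, h1]
            exact hPclosed w'
          · have hrk : r - k ≤ n - k := by omega
            have e1 := hPψ w (r - k) hrk
            have e2 := hPψ w' (r - k) hrk
            rw [if_neg (by omega)] at e1
            rw [if_neg (by omega)] at e2
            rw [show r - k + k = r by omega] at e1 e2
            rw [e1, e2]
        · rw [w.2.2.2.1 r hr3, w'.2.2.2.1 r hr3, w.2.2.1, w'.2.2.1]
  calc Nat.card S
      ≤ Nat.card (Fin (n - k + 1) × (Fin (k - 1) ↪ Fin (n - 1))) :=
        Nat.card_le_card_of_injective _ hFinj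
    _ = muBound n k := muBound_eq n k hn hk1

/-- The fiber bound for the deletion map `ψ_k`: for a fixed walk `W` of length
`n - k` from vertex `1` (`⟨0,_⟩`) to vertex `2` (`⟨1,_⟩`) on `n` vertices, the
number of walks of length `n` from `1` to `2` whose minimal closed-subwalk length
is `k` and which yield `W` after deleting their first closed subwalk of length `k`
is at most `μ(n,k)`. Walks of length `n` are encoded as functions `ℕ → Fin n`
constant from position `n` on. -/
theorem deletion_fiber_card_le (n k : ℕ) (hn : 2 ≤ n) (hk1 : 1 ≤ k)
    (hkn : k ≤ n - 1) (W : ℕ → Fin n)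
    (hW0 : W 0 = ⟨0, by omega⟩) (hWend : W (n - k) = ⟨1, by omega⟩) :
    Nat.card {w : ℕ → Fin n //
      -- `w` is a walk of length `n` from vertex `1` to vertex `2`:
      w 0 = ⟨0, by omega⟩ ∧ w n = ⟨1, by omega⟩ ∧ (∀ r, n < r → w r = w n) ∧
      -- no closed subwalk of length `< k`:
      (∀ l p, 1 ≤ l → l < k → p + l ≤ n → w p ≠ w (p + l)) ∧
      -- some closed subwalk of length `k` exists, and deleting the first one
      -- (at its first position `p`) yields `W`:
      (∃ p, (p + k ≤ n ∧ w p = w (p + k) ∧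
          ∀ q < p, q + k ≤ n → w q ≠ w (q + k)) ∧
        ∀ r ≤ n - k, (if r ≤ p then w r else w (r + k)) = W r)} ≤
    muBound n k :=
  fiber_aux n k hn hk1 hkn W _ _
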